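/- Let n ≥ 1, D = 2^n, δ ≥ 0, and let μ be a probability measure on the unit sphere of ℂ^D such that E_{ψ∼μ}[P_ψ(x)] = 1/D for every x ∈ {0,1}^n and |E_{ψ∼μ}[P_ψ(x)P_ψ(y)] − (1+δ_{x,y})/(D(D+1))| ≤ δ·D^{−3} for all x, y ∈ {0,1}^n (δ_{x,y} the Kronecker delta). Then for every function φ : {0,1}^n → [−1,1] and every τ > 0, μ{ψ : |P_ψ[φ] − 𝒰[φ]| > τ} ≤ (2+δ)/(D·τ²). -/

import Mathlib

open MeasureTheory

/-- The Borel measurable structure on `EuclideanSpace ℂ ι`. -/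
noncomputable instance euclideanComplexMeasurableSpace (ι : Type*) :
    MeasurableSpace (EuclideanSpace ℂ ι) :=
  MeasurableSpace.comap WithLp.ofLp MeasurableSpace.pi

instance euclideanComplexBorel (ι : Type*) [Countable ι] :
    BorelSpace (EuclideanSpace ℂ ι) := PiLp.borelSpace 2

/-- **Maximally distinguishable fraction for approximate 2-designs.** Let `μ` be a probability
measure on the unit sphere of `ℂ^{2^n}` such that `E_ψ[P_ψ(x)] = 1/D` for all `x` and
`|E_ψ[P_ψ(x)P_ψ(y)] − (1+δ_{x,y})/(D(D+1))| ≤ δ·D⁻³` for all `x, y` (`D = 2^n`,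
`P_ψ(x) = |ψ_x|²`).  Then for every `φ : {0,1}^n → [−1,1]` and `τ > 0`,
`μ{ψ : |P_ψ[φ] − 𝒰[φ]| > τ} ≤ (2+δ)/(D·τ²)`. -/
theorem stmt_13 (n : ℕ) (hn : 1 ≤ n) (δ : ℝ) (hδ : 0 ≤ δ)
    (μ : Measure (EuclideanSpace ℂ (Fin n → Bool))) [IsProbabilityMeasure μ]
    (hsphere : μ (Metric.sphere 0 1) = 1)
    (hmom1 : ∀ x : Fin n → Bool,
      ∫ ψ, ‖(ψ x)‖ ^ 2 ∂μ = ((2 : ℝ) ^ n)⁻¹)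
    (hmom2 : ∀ x y : Fin n → Bool,
      |(∫ ψ, ‖(ψ x)‖ ^ 2 * ‖(ψ y)‖ ^ 2 ∂μ)
          - (1 + if x = y then 1 else 0) / ((2 : ℝ) ^ n * ((2 : ℝ) ^ n + 1))|
        ≤ δ / ((2 : ℝ) ^ n) ^ 3)
    (φ : (Fin n → Bool) → ℝ) (hφ : ∀ x, |φ x| ≤ 1) (τ : ℝ) (hτ : 0 < τ) :
    μ {ψ | |(∑ x : Fin n → Bool, ‖(ψ x)‖ ^ 2 * φ x)
            - (∑ x : Fin n → Bool, φ x) / 2 ^ n| > τ}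
      ≤ ENNReal.ofReal ((2 + δ) / ((2 : ℝ) ^ n * τ ^ 2)) := by
  classical
  set E := EuclideanSpace ℂ (Fin n → Bool)
  set D : ℝ := (2 : ℝ) ^ n with hDdef
  have hD1 : (1 : ℝ) ≤ D := one_le_pow₀ (by norm_num)
  have hD0 : (0 : ℝ) < D := lt_of_lt_of_le one_pos hD1
  have hcard : ((Finset.univ : Finset (Fin n → Bool)).card : ℝ) = D := by
    simp [hDdef, Finset.card_univ]
  set p : E → (Fin n → Bool) → ℝ := fun ψ x => ‖(ψ x)‖ ^ 2 with hp
  set S : ℝ := ∑ x : Fin n → Bool, φ x with hS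
  set F : E → ℝ := fun ψ => (∑ x : Fin n → Bool, p ψ x * φ x) - S / D with hF
  -- measurability
  have hmp : ∀ x, Measurable (fun ψ : E => p ψ x) := by
    intro x
    have : (fun ψ : E => p ψ x) = fun ψ : E => ‖ψ x‖ ^ 2 := by
      funext ψ; simp [hp]
    rw [this]
    exact ((measurable_pi_apply x).comp (WithLp.measurable_ofLp 2 (∀ _ : Fin n → Bool, ℂ))).norm.pow_const 2
  have hmF : Measurable F := by
    apply Measurable.sub _ measurable_const
    exact Finset.measurable_sum _ (fun x _ => (hmp x).mul_const _)
  -- a.e. facts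
  have hae : ∀ᵐ ψ ∂μ, ψ ∈ Metric.sphere (0 : E) 1 := by
    have hmeass : MeasurableSet (Metric.sphere (0 : E) 1) :=
      Metric.isClosed_sphere.measurableSet
    rw [ae_iff]
    have hc : {ψ : E | ¬ ψ ∈ Metric.sphere (0 : E) 1} = (Metric.sphere (0 : E) 1)ᶜ := rfl
    rw [hc, measure_compl hmeass (measure_ne_top μ _), hsphere, measure_univ, tsub_self]
  have hsum1 : ∀ᵐ ψ ∂μ, ∑ x : Fin n → Bool, p ψ x = 1 := by
    filter_upwards [hae] with ψ h
    rw [mem_sphere_zero_iff_norm, EuclideanSpace.norm_eq, Real.sqrt_eq_one] at h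
    simpa [hp] using h
  have hple1 : ∀ᵐ ψ ∂μ, ∀ x, p ψ x ≤ 1 := by
    filter_upwards [hsum1] with ψ h x
    calc p ψ x ≤ ∑ y : Fin n → Bool, p ψ y :=
          Finset.single_le_sum (fun y _ => by positivity) (Finset.mem_univ x)
      _ = 1 := h
  -- integrability
  have hIntp : ∀ x, Integrable (fun ψ => p ψ x) μ := by
    intro x
    refine Integrable.mono' (integrable_const 1) (hmp x).aestronglyMeasurable ?_
    filter_upwards [hple1] with ψ h
    rw [Real.norm_eq_abs, abs_of_nonneg (by positivity)]
    exact h x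
  have hIntpp : ∀ x y, Integrable (fun ψ => p ψ x * p ψ y) μ := by
    intro x y
    refine Integrable.mono' (integrable_const 1) ((hmp x).mul (hmp y)).aestronglyMeasurable ?_
    filter_upwards [hple1] with ψ h
    rw [Real.norm_eq_abs, abs_of_nonneg (by positivity)]
    exact mul_le_one₀ (h x) (by positivity) (h y)
  have hIntF2 : Integrable (fun ψ => F ψ ^ 2) μ := by
    refine Integrable.mono' (integrable_const 4) (hmF.pow_const 2).aestronglyMeasurable ?_
    filter_upwards [hsum1, hple1] with ψ h hle
    have habs : |F ψ| ≤ 2 := by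
      have h1 : |∑ x : Fin n → Bool, p ψ x * φ x| ≤ 1 := by
        calc |∑ x : Fin n → Bool, p ψ x * φ x| ≤ ∑ x : Fin n → Bool, |p ψ x * φ x| :=
              Finset.abs_sum_le_sum_abs _ _
          _ ≤ ∑ x : Fin n → Bool, p ψ x := by
              refine Finset.sum_le_sum fun x _ => ?_
              rw [abs_mul, abs_of_nonneg (by positivity : (0:ℝ) ≤ p ψ x)]
              calc p ψ x * |φ x| ≤ p ψ x * 1 :=
                    mul_le_mul_of_nonneg_left (hφ x) (by positivity)
                _ = p ψ x := mul_one _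
          _ = 1 := h
      have h2 : |S / D| ≤ 1 := by
        rw [abs_div, abs_of_nonneg hD0.le, div_le_one hD0]
        calc |S| ≤ ∑ x : Fin n → Bool, |φ x| := Finset.abs_sum_le_sum_abs _ _
          _ ≤ ∑ _x : Fin n → Bool, (1:ℝ) := Finset.sum_le_sum fun x _ => hφ x
          _ = D := by rw [Finset.sum_const, nsmul_eq_mul, mul_one, hcard]
      calc |F ψ| ≤ |∑ x : Fin n → Bool, p ψ x * φ x| + |S / D| := abs_sub _ _
        _ ≤ 2 := by linarith
    rw [Real.norm_eq_abs, abs_of_nonneg (sq_nonneg _)]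
    calc F ψ ^ 2 = |F ψ| ^ 2 := (sq_abs _).symm
      _ ≤ 2 ^ 2 := by gcongr
      _ = 4 := by norm_num
  -- second moments
  set M : (Fin n → Bool) → (Fin n → Bool) → ℝ := fun x y => ∫ ψ, p ψ x * p ψ y ∂μ with hM
  have hMc : ∀ x y, |M x y - (1 + if x = y then 1 else 0) / (D * (D + 1))| ≤ δ / D ^ 3 := by
    intro x y
    simpa [hM, hp] using hmom2 x y
  -- expectation of F ^ 2
  have hEF2 : ∫ ψ, F ψ ^ 2 ∂μ
      = (∑ x : Fin n → Bool, ∑ y : Fin n → Bool, φ x * φ y * M x y) - S ^ 2 / D ^ 2 := by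
    have hexp : ∀ ψ : E, F ψ ^ 2
        = (∑ x : Fin n → Bool, ∑ y : Fin n → Bool, φ x * φ y * (p ψ x * p ψ y))
          - (2 * (S / D)) * (∑ x : Fin n → Bool, p ψ x * φ x) + (S / D) ^ 2 := by
      intro ψ
      have h1 : (∑ x : Fin n → Bool, p ψ x * φ x) * (∑ y : Fin n → Bool, p ψ y * φ y)
          = ∑ x : Fin n → Bool, ∑ y : Fin n → Bool, φ x * φ y * (p ψ x * p ψ y) := by
        rw [Finset.sum_mul_sum]
        exact Finset.sum_congr rfl fun x _ => Finset.sum_congr rfl fun y _ => by ring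
      have h2 : F ψ ^ 2 = (∑ x : Fin n → Bool, p ψ x * φ x) * (∑ y : Fin n → Bool, p ψ y * φ y)
          - (2 * (S / D)) * (∑ x : Fin n → Bool, p ψ x * φ x) + (S / D) ^ 2 := by
        simp only [hF]; ring
      rw [h2, h1]
    have hIntDbl : ∀ x : Fin n → Bool, ∀ y : Fin n → Bool,
        Integrable (fun ψ => φ x * φ y * (p ψ x * p ψ y)) μ :=
      fun x y => (hIntpp x y).const_mul _
    have hIntSum : Integrable
        (fun ψ => ∑ x : Fin n → Bool, ∑ y : Fin n → Bool, φ x * φ y * (p ψ x * p ψ y)) μ :=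
      integrable_finset_sum _ fun x _ => integrable_finset_sum _ fun y _ => hIntDbl x y
    have hIntA : Integrable (fun ψ => ∑ x : Fin n → Bool, p ψ x * φ x) μ :=
      integrable_finset_sum _ fun x _ => (hIntp x).mul_const _
    have hEA : ∫ ψ, (∑ x : Fin n → Bool, p ψ x * φ x) ∂μ = S / D := by
      rw [integral_finset_sum _ fun x _ => (hIntp x).mul_const _]
      have h3 : ∀ x : Fin n → Bool, ∫ ψ, p ψ x * φ x ∂μ = φ x / D := by
        intro x
        rw [integral_mul_const]
        simp only [hp]
        rw [hmom1 x]
        ring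
      rw [Finset.sum_congr rfl fun x _ => h3 x, hS, Finset.sum_div]
    calc ∫ ψ, F ψ ^ 2 ∂μ
        = ∫ ψ, ((∑ x : Fin n → Bool, ∑ y : Fin n → Bool, φ x * φ y * (p ψ x * p ψ y))
            - (2 * (S / D)) * (∑ x : Fin n → Bool, p ψ x * φ x) + (S / D) ^ 2) ∂μ := by
          exact integral_congr_ae (ae_of_all _ fun ψ => hexp ψ)
      _ = (∑ x : Fin n → Bool, ∑ y : Fin n → Bool, φ x * φ y * M x y)
            - (2 * (S / D)) * (S / D) + (S / D) ^ 2 := by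
          have hIntcA : Integrable
              (fun ψ : E => (2 * (S / D)) * (∑ x : Fin n → Bool, p ψ x * φ x)) μ :=
            hIntA.const_mul _
          have hIntSub : Integrable (fun ψ : E =>
              (∑ x : Fin n → Bool, ∑ y : Fin n → Bool, φ x * φ y * (p ψ x * p ψ y))
                - (2 * (S / D)) * (∑ x : Fin n → Bool, p ψ x * φ x)) μ :=
            hIntSum.sub hIntcA
          rw [integral_add hIntSub (integrable_const _),
            integral_sub hIntSum hIntcA, integral_const, probReal_univ,
            one_smul, integral_finset_sum _ fun x _ =>
              integrable_finset_sum _ fun y _ => hIntDbl x y]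
          rw [integral_const_mul, hEA]
          congr 1
          congr 1
          refine Finset.sum_congr rfl fun x _ => ?_
          rw [integral_finset_sum _ fun y _ => hIntDbl x y]
          exact Finset.sum_congr rfl fun y _ => integral_const_mul _ _
      _ = (∑ x : Fin n → Bool, ∑ y : Fin n → Bool, φ x * φ y * M x y) - S ^ 2 / D ^ 2 := by
          ring
  -- bound the double sum
  set Q : ℝ := ∑ x : Fin n → Bool, φ x ^ 2 with hQ
  have hQle : Q ≤ D := by
    calc Q ≤ ∑ _x : Fin n → Bool, (1 : ℝ) := by
          refine Finset.sum_le_sum fun x _ => ?_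
          calc φ x ^ 2 = |φ x| ^ 2 := (sq_abs _).symm
            _ ≤ 1 ^ 2 := pow_le_pow_left₀ (abs_nonneg _) (hφ x) 2
            _ = 1 := one_pow 2
      _ = D := by rw [Finset.sum_const, nsmul_eq_mul, mul_one, hcard]
  have hdbl : (∑ x : Fin n → Bool, ∑ y : Fin n → Bool, φ x * φ y * M x y)
      ≤ δ / D + (S ^ 2 + Q) / (D * (D + 1)) := by
    have h1 : ∀ x y : Fin n → Bool, φ x * φ y * M x y
        ≤ δ / D ^ 3 + φ x * φ y * ((1 + if x = y then 1 else 0) / (D * (D + 1))) := by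
      intro x y
      have h2 := hMc x y
      have hφφ : |φ x * φ y| ≤ 1 := by
        rw [abs_mul]
        exact mul_le_one₀ (hφ x) (abs_nonneg _) (hφ y)
      have h3 : |φ x * φ y * (M x y - (1 + if x = y then 1 else 0) / (D * (D + 1)))|
          ≤ δ / D ^ 3 := by
        rw [abs_mul]
        calc |φ x * φ y| * |M x y - (1 + if x = y then 1 else 0) / (D * (D + 1))|
            ≤ 1 * (δ / D ^ 3) := mul_le_mul hφφ h2 (abs_nonneg _) zero_le_one
          _ = δ / D ^ 3 := one_mul _
      have h4 := (abs_le.mp h3).2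
      nlinarith [h4]
    calc (∑ x : Fin n → Bool, ∑ y : Fin n → Bool, φ x * φ y * M x y)
        ≤ ∑ x : Fin n → Bool, ∑ y : Fin n → Bool,
            (δ / D ^ 3 + φ x * φ y * ((1 + if x = y then 1 else 0) / (D * (D + 1)))) := by
          exact Finset.sum_le_sum fun x _ => Finset.sum_le_sum fun y _ => h1 x y
      _ = (∑ _x : Fin n → Bool, ∑ _y : Fin n → Bool, δ / D ^ 3)
            + ∑ x : Fin n → Bool, ∑ y : Fin n → Bool,
              φ x * φ y * ((1 + if x = y then 1 else 0) / (D * (D + 1))) := by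
          rw [← Finset.sum_add_distrib]
          exact Finset.sum_congr rfl fun x _ => Finset.sum_add_distrib
      _ = δ / D + (S ^ 2 + Q) / (D * (D + 1)) := by
          congr 1
          · rw [Finset.sum_const, Finset.sum_const, nsmul_eq_mul, nsmul_eq_mul, hcard]
            field_simp
          · have h5 : ∀ x : Fin n → Bool,
                (∑ y : Fin n → Bool, φ x * φ y * ((1 + if x = y then 1 else 0) / (D * (D + 1))))
                = (φ x * S + φ x ^ 2) / (D * (D + 1)) := by
              intro x
              have h6 : ∀ y : Fin n → Bool,
                  φ x * φ y * ((1 + if x = y then 1 else 0) / (D * (D + 1)))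
                  = φ x * φ y / (D * (D + 1))
                    + (if x = y then φ x * φ y / (D * (D + 1)) else 0) := by
                intro y; split_ifs <;> ring
              rw [Finset.sum_congr rfl fun y _ => h6 y, Finset.sum_add_distrib,
                Finset.sum_ite_eq]
              simp only [Finset.mem_univ, if_true]
              rw [← Finset.sum_div, ← Finset.mul_sum, ← hS]
              ring
            rw [Finset.sum_congr rfl fun x _ => h5 x, ← Finset.sum_div]
            congr 1
            rw [Finset.sum_add_distrib, ← Finset.sum_mul, ← hS, ← hQ, sq]
  -- final bound on the variance
  have hkey : ∫ ψ, F ψ ^ 2 ∂μ ≤ (2 + δ) / D := by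
    rw [hEF2]
    have hb1 : S ^ 2 / (D * (D + 1)) ≤ S ^ 2 / D ^ 2 := by
      apply div_le_div_of_nonneg_left (sq_nonneg S) (by positivity) (by nlinarith)
    have hQ0 : 0 ≤ Q := Finset.sum_nonneg fun x _ => sq_nonneg _
    have hb2 : Q / (D * (D + 1)) ≤ 1 / D := by
      have h7 : Q / (D * (D + 1)) ≤ D / (D * D) :=
        div_le_div₀ hD0.le hQle (by positivity) (by nlinarith)
      have h8 : D / (D * D) = 1 / D := by field_simp
      linarith [h7, h8.le]
    have hsplit : (S ^ 2 + Q) / (D * (D + 1)) = S ^ 2 / (D * (D + 1)) + Q / (D * (D + 1)) :=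
      add_div _ _ _
    have hfin : (2 + δ) / D = 2 / D + δ / D := add_div _ _ _
    have h12 : 1 / D ≤ 2 / D := by gcongr; norm_num
    linarith [hdbl]
  -- Chebyshev
  have hcheb := mul_meas_ge_le_integral_of_nonneg (μ := μ)
    (ae_of_all _ fun ψ => sq_nonneg (F ψ)) hIntF2 (τ ^ 2)
  have hsub : {ψ : E | |F ψ| > τ} ⊆ {ψ : E | τ ^ 2 ≤ F ψ ^ 2} := by
    intro ψ h
    have h' : τ ≤ |F ψ| := le_of_lt h
    calc τ ^ 2 ≤ |F ψ| ^ 2 := by gcongr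
      _ = F ψ ^ 2 := sq_abs _
  have hfin2 : μ {ψ : E | τ ^ 2 ≤ F ψ ^ 2} ≠ ⊤ := measure_ne_top _ _
  have hμle : (μ {ψ : E | τ ^ 2 ≤ F ψ ^ 2}).toReal ≤ (2 + δ) / (D * τ ^ 2) := by
    have hτ2 : (0 : ℝ) < τ ^ 2 := by positivity
    have h9 : (2 + δ) / (D * τ ^ 2) = ((2 + δ) / D) / τ ^ 2 := by
      rw [div_div]
    rw [h9, le_div_iff₀ hτ2, mul_comm]
    exact le_trans hcheb hkey
  calc μ {ψ | |(∑ x : Fin n → Bool, ‖(ψ x)‖ ^ 2 * φ x)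
            - (∑ x : Fin n → Bool, φ x) / 2 ^ n| > τ}
      = μ {ψ : E | |F ψ| > τ} := by rfl
    _ ≤ μ {ψ : E | τ ^ 2 ≤ F ψ ^ 2} := measure_mono hsub
    _ = ENNReal.ofReal ((μ {ψ : E | τ ^ 2 ≤ F ψ ^ 2}).toReal) :=
        (ENNReal.ofReal_toReal hfin2).symm
    _ ≤ ENNReal.ofReal ((2 + δ) / (D * τ ^ 2)) := ENNReal.ofReal_le_ofReal hμle
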